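/- Let 𝔽 be a field, let L_{ε,φ}(λ) ∈ 𝔽[λ]^{ε×(ε+1)} be a dual basis for a family φ = (φ_0,…,φ_ε) and L_{η,ψ}(λ) ∈ 𝔽[λ]^{η×(η+1)} a dual basis for a family ψ = (ψ_0,…,ψ_η). Let w ∈ 𝔽^{η+1} be a constant vector such that wᵀ·π_{η,ψ}(λ) is a nonzero constant, and let A ∈ 𝔽^{(ε+1)×(ε+1)} be invertible. Set k := (ε+1)(η+1) − 1 and L(λ) := [[A ⊗ L_{η,ψ}(λ)],[L_{ε,φ}(λ) ⊗ wᵀ]]. Then: (i) L(λ) has k rows and k+1 columns and L(λ)·(π_{ε,φ}(λ) ⊗ π_{η,ψ}(λ)) = 0 identically; (ii) L(λ₀) has rank k for every λ₀ ∈ 𝔽. In particular, L(λ) is a dual basis for the product family whose coefficient vector is π_{ε,φ}(λ) ⊗ π_{η,ψ}(λ). -/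

import Mathlib

open Polynomial Matrix

namespace PaperLin

variable {F : Type*} [Field F]

/-- The `k × (k+1)` matrix pencil `L` is a (full row-rank, linear) dual basis
for the polynomial vector `π`: its entries have degree at most 1,
`L(λ)·π(λ) = 0` identically, and `L(λ₀)` has rank `k` for every `λ₀ ∈ F`. -/
def IsDualBasis {k : ℕ} (L : Matrix (Fin k) (Fin (k + 1)) (Polynomial F))
    (π : Fin (k + 1) → Polynomial F) : Prop :=
  (∀ i j, (L i j).degree ≤ 1) ∧
  L.mulVec π = 0 ∧
  ∀ x : F, (L.map (Polynomial.eval x)).rank = k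

lemma rank_eq_card_iff {m n : Type*} [Fintype m] [Fintype n] (M : Matrix m n F) :
    M.rank = Fintype.card m ↔ LinearIndependent F (fun i => M i) := by
  change M.rank = Fintype.card m ↔ LinearIndependent F M.row
  rw [linearIndependent_iff_card_eq_finrank_span, Set.finrank,
    ← Matrix.rank_eq_finrank_span_row, eq_comm]

lemma vecMul_eq_zero_of_rank {m n : Type*} [Fintype m] [Fintype n] (M : Matrix m n F)
    (h : M.rank = Fintype.card m) {v : m → F} (hv : M.vecMul v = 0) : v = 0 := by
  have hinj := Matrix.vecMul_injective_iff.mpr ((rank_eq_card_iff M).mp h)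
  have h0 : M.vecMul (0 : m → F) = 0 := by
    funext j; simp [Matrix.vecMul, dotProduct]
  exact hinj (hv.trans h0.symm)

lemma rank_eq_card_of_ker {m n : Type*} [Fintype m] [Fintype n] (M : Matrix m n F)
    (h : ∀ v, M.vecMul v = 0 → v = 0) : M.rank = Fintype.card m := by
  rw [rank_eq_card_iff]
  change LinearIndependent F M.row
  rw [← Matrix.vecMul_injective_iff]
  intro a b hab
  have h1 : M.vecMul (a - b) = 0 := by
    rw [Matrix.sub_vecMul]
    exact sub_eq_zero.mpr hab
  exact sub_eq_zero.mp (h _ h1)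

/-- The product dual basis `L = [[A ⊗ L_ψ],[L_φ ⊗ wᵀ]]` is a dual basis for
the product family `φ ⊗ ψ`. -/
theorem statement1 (ε η : ℕ)
    (φ : Fin (ε + 1) → Polynomial F) (ψ : Fin (η + 1) → Polynomial F)
    (Lφ : Matrix (Fin ε) (Fin (ε + 1)) (Polynomial F))
    (Lψ : Matrix (Fin η) (Fin (η + 1)) (Polynomial F))
    (hφ : IsDualBasis Lφ fun i => φ i.rev)
    (hψ : IsDualBasis Lψ fun i => ψ i.rev)
    (w : Fin (η + 1) → F)
    (hw : ∃ c : F, c ≠ 0 ∧ ∑ i, Polynomial.C (w i) * ψ i.rev = Polynomial.C c)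
    (A : Matrix (Fin (ε + 1)) (Fin (ε + 1)) F) (hA : IsUnit A) :
    let L : Matrix ((Fin (ε + 1) × Fin η) ⊕ (Fin ε × Unit))
        (Fin (ε + 1) × Fin (η + 1)) (Polynomial F) :=
      Matrix.of (Sum.elim
        (fun p q => Polynomial.C (A p.1 q.1) * Lψ p.2 q.2)
        (fun p q => Lφ p.1 q.1 * Polynomial.C (w q.2)))
    Fintype.card ((Fin (ε + 1) × Fin η) ⊕ (Fin ε × Unit)) = (ε + 1) * (η + 1) - 1 ∧
    Fintype.card (Fin (ε + 1) × Fin (η + 1)) = (ε + 1) * (η + 1) ∧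
    L.mulVec (fun q => φ q.1.rev * ψ q.2.rev) = 0 ∧
    ∀ x : F, (L.map (Polynomial.eval x)).rank = (ε + 1) * (η + 1) - 1 := by
  intro L
  classical
  obtain ⟨-, hφ0, hφr⟩ := hφ
  obtain ⟨-, hψ0, hψr⟩ := hψ
  obtain ⟨c, hc, hwc⟩ := hw
  have hmul : (ε + 1) * (η + 1) = ((ε + 1) * η + ε) + 1 := by ring
  have hcard : Fintype.card ((Fin (ε + 1) × Fin η) ⊕ (Fin ε × Unit))
      = (ε + 1) * (η + 1) - 1 := by
    simp [Fintype.card_sum, Fintype.card_prod, hmul]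
  -- row identities evaluated as polynomials
  have hψ0' : ∀ p2 : Fin η, ∑ q2, Lψ p2 q2 * ψ q2.rev = 0 := by
    intro p2
    have h := congr_fun hψ0 p2
    simpa [Matrix.mulVec, dotProduct] using h
  have hφ0' : ∀ i : Fin ε, ∑ q1, Lφ i q1 * φ q1.rev = 0 := by
    intro i
    have h := congr_fun hφ0 i
    simpa [Matrix.mulVec, dotProduct] using h
  refine ⟨hcard, by simp, ?_, ?_⟩
  · -- mulVec identity
    funext r
    rcases r with ⟨p1, p2⟩ | ⟨i, _⟩
    · have key : ∀ (q1 : Fin (ε + 1)) (q2 : Fin (η + 1)),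
          Polynomial.C (A p1 q1) * Lψ p2 q2 * (φ q1.rev * ψ q2.rev)
            = (Polynomial.C (A p1 q1) * φ q1.rev) * (Lψ p2 q2 * ψ q2.rev) := by
        intros; ring
      simp only [Matrix.mulVec, dotProduct, L, Matrix.of_apply, Sum.elim_inl,
        Fintype.sum_prod_type, Pi.zero_apply, key, ← Finset.mul_sum]
      simp [hψ0']
    · have key : ∀ (q1 : Fin (ε + 1)) (q2 : Fin (η + 1)),
          Lφ i q1 * Polynomial.C (w q2) * (φ q1.rev * ψ q2.rev)
            = (Lφ i q1 * φ q1.rev) * (Polynomial.C (w q2) * ψ q2.rev) := by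
        intros; ring
      simp only [Matrix.mulVec, dotProduct, L, Matrix.of_apply, Sum.elim_inr,
        Fintype.sum_prod_type, Pi.zero_apply, key, ← Finset.mul_sum, hwc]
      simp only [← Finset.sum_mul, hφ0', zero_mul]
  · -- full row rank at every point
    intro x
    rw [← hcard]
    apply rank_eq_card_of_ker
    intro v hv
    set u : Fin (ε + 1) → Fin η → F := fun p1 p2 => v (Sum.inl (p1, p2)) with hu_def
    set t : Fin ε → F := fun i => v (Sum.inr (i, ())) with ht_def
    -- the star identity
    have hstar : ∀ (q1 : Fin (ε + 1)) (q2 : Fin (η + 1)),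
        (∑ p1, A p1 q1 * ∑ p2, u p1 p2 * (Lψ p2 q2).eval x)
          + (∑ i, t i * (Lφ i q1).eval x) * w q2 = 0 := by
      intro q1 q2
      have h := congr_fun hv (q1, q2)
      simp only [Matrix.vecMul, dotProduct, Fintype.sum_sum_type,
        Fintype.sum_prod_type, Pi.zero_apply, Matrix.map_apply, Matrix.of_apply,
        Sum.elim_inl, Sum.elim_inr, eval_mul, eval_C, L] at h
      have e1 : ∀ p1 : Fin (ε + 1),
          A p1 q1 * ∑ p2, u p1 p2 * (Lψ p2 q2).eval x
            = ∑ p2, v (Sum.inl (p1, p2)) * (A p1 q1 * (Lψ p2 q2).eval x) := by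
        intro p1
        rw [Finset.mul_sum]
        exact Finset.sum_congr rfl fun p2 _ => by simp [hu_def]; ring
      have e2 : (∑ i, t i * (Lφ i q1).eval x) * w q2
          = ∑ i, ∑ _u : Unit, v (Sum.inr (i, _u)) * ((Lφ i q1).eval x * w q2) := by
        rw [Finset.sum_mul]
        refine Finset.sum_congr rfl fun i _ => ?_
        simp [ht_def]; ring
      simp only [e1, e2]
      exact h
    -- evaluated dual-basis identities
    have hψx : ∀ p2 : Fin η, ∑ q2, (Lψ p2 q2).eval x * (ψ q2.rev).eval x = 0 := by
      intro p2
      have := congr_arg (Polynomial.eval x) (hψ0' p2)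
      simpa [Polynomial.eval_finset_sum] using this
    have hwpi : ∑ q2, w q2 * (ψ q2.rev).eval x = c := by
      have := congr_arg (Polynomial.eval x) hwc
      simpa [Polynomial.eval_finset_sum] using this
    -- pairing the rows with π_ψ kills the g-part
    have hgpi : ∀ p1 : Fin (ε + 1),
        ∑ q2, (∑ p2, u p1 p2 * (Lψ p2 q2).eval x) * (ψ q2.rev).eval x = 0 := by
      intro p1
      simp only [Finset.sum_mul]
      rw [Finset.sum_comm]
      simp only [mul_assoc, ← Finset.mul_sum]
      simp [hψx]
    -- step 1 : s = 0
    have hs0 : ∀ q1 : Fin (ε + 1), (∑ i, t i * (Lφ i q1).eval x) = 0 := by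
      intro q1
      have h1 : ∑ q2, ((∑ p1, A p1 q1 * ∑ p2, u p1 p2 * (Lψ p2 q2).eval x)
          + (∑ i, t i * (Lφ i q1).eval x) * w q2) * (ψ q2.rev).eval x = 0 := by
        simp only [hstar, zero_mul, Finset.sum_const_zero]
      have h2 : ∑ q2, (∑ p1, A p1 q1 * ∑ p2, u p1 p2 * (Lψ p2 q2).eval x)
          * (ψ q2.rev).eval x = 0 := by
        simp only [Finset.sum_mul]
        rw [Finset.sum_comm]
        simp only [mul_assoc, ← Finset.mul_sum]
        simp [hgpi]
      simp only [add_mul, Finset.sum_add_distrib, h2, zero_add, mul_assoc,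
        ← Finset.mul_sum, hwpi] at h1
      exact (mul_eq_zero.mp h1).resolve_right hc
    -- step 2 : t = 0
    have ht : t = 0 := by
      apply vecMul_eq_zero_of_rank (Lφ.map (Polynomial.eval x)) (by simpa using hφr x)
      funext q1
      simpa [Matrix.vecMul, dotProduct, Matrix.map_apply] using hs0 q1
    -- step 3 : g = 0
    have hG : ∀ (q2 : Fin (η + 1)) (p1 : Fin (ε + 1)),
        (∑ p2, u p1 p2 * (Lψ p2 q2).eval x) = 0 := by
      intro q2
      have hAinj := Matrix.vecMul_injective_iff_isUnit.mpr hA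
      have hz : A.vecMul (fun p1 => ∑ p2, u p1 p2 * (Lψ p2 q2).eval x)
          = A.vecMul (0 : Fin (ε + 1) → F) := by
        funext q1
        have h := hstar q1 q2
        rw [hs0 q1, zero_mul, add_zero] at h
        show ∑ p1, (∑ p2, u p1 p2 * (Lψ p2 q2).eval x) * A p1 q1 = _
        have : A.vecMul (0 : Fin (ε + 1) → F) q1 = 0 := by
          simp [Matrix.vecMul, dotProduct]
        rw [this]
        exact (Finset.sum_congr rfl fun p1 _ => mul_comm _ _).trans h
      have := hAinj hz
      exact fun p1 => congr_fun this p1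
    -- step 4 : u = 0
    have hu : ∀ p1, (fun p2 => u p1 p2) = 0 := by
      intro p1
      apply vecMul_eq_zero_of_rank (Lψ.map (Polynomial.eval x)) (by simpa using hψr x)
      funext q2
      simpa [Matrix.vecMul, dotProduct, Matrix.map_apply] using hG q2 p1
    funext r
    rcases r with ⟨p1, p2⟩ | ⟨i, uu⟩
    · exact congr_fun (hu p1) p2
    · cases uu
      exact congr_fun ht i


end PaperLin
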